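/- For every n ≥ 1 and every probability function μ : {0,1}^n → ℝ (i.e., μ(x) ≥ 0 for all x and Σ_{x∈{0,1}^n} μ(x) = 1), there exists an injective map c : {0,1}^n → {0,1}* such that for every x ∈ {0,1}^n: |c(x)| ≤ n + 1 and μ(x) ≤ 4 · 2^{−|c(x)|}. (This is the content of the encoding x ↦ x'' used in the reduction of an arbitrary DistNP problem to the bounded halting problem.) -/

import Mathlib

private lemma foldr_bit_bits (m : ℕ) : m.bits.foldr Nat.bit 0 = m := by
  induction m using Nat.binaryRec' with
  | zero => simp
  | bit b n h ih => rw [Nat.bits_append_bit n b h, List.foldr_cons, ih]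

private lemma bits_inj : Function.Injective Nat.bits := by
  intro a b h
  have := foldr_bit_bits a
  rw [h, foldr_bit_bits] at this
  exact this.symm

/-- For every `n ≥ 1` and every probability function `μ` on `{0,1}^n`
(`μ(x) ≥ 0`, `Σ_x μ(x) = 1`), there exists an injective map `c : {0,1}^n → {0,1}*`
such that for every `x ∈ {0,1}^n`: `|c(x)| ≤ n + 1` and `μ(x) ≤ 4·2^{−|c(x)|}`.
(Content of the encoding `x ↦ x''` used in the reduction of an arbitrary DistNP
problem to the bounded halting problem.)  Words in `{0,1}^n` are represented as
functions `Fin n → Bool`, and binary strings as lists of booleans. -/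
theorem exists_short_code
    (n : ℕ) (hn : 1 ≤ n) (μ : (Fin n → Bool) → ℝ)
    (hpos : ∀ x : Fin n → Bool, 0 ≤ μ x)
    (hsum : ∑ x : Fin n → Bool, μ x = 1) :
    ∃ c : (Fin n → Bool) → List Bool, Function.Injective c ∧
      ∀ x : Fin n → Bool,
        (c x).length ≤ n + 1 ∧ μ x ≤ 4 / 2 ^ (c x).length := by
  classical
  have hcard : Fintype.card (Fin n → Bool) = 2 ^ n := by simp
  set N := 2 ^ n with hN
  let E : (Fin n → Bool) ≃ Fin N := Fintype.equivFinOfCardEq hcard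
  let g : Fin N → ℝ := fun i => -μ (E.symm i)
  let σ : Equiv.Perm (Fin N) := Tuple.sort g
  have hmono : Monotone (g ∘ σ) := Tuple.monotone_sort g
  -- rank of x
  let r : (Fin n → Bool) → Fin N := fun x => σ.symm (E x)
  have hrinj : Function.Injective r :=
    σ.symm.injective.comp E.injective
  -- the code
  let c : (Fin n → Bool) → List Bool := fun x => Nat.bits (r x : ℕ)
  refine ⟨c, ?_, ?_⟩
  · exact fun a b h => hrinj (Fin.val_injective (bits_inj h))
  · intro x
    have hlen : (c x).length = Nat.size (r x : ℕ) := Nat.size_eq_bits_len _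
    constructor
    · rw [hlen]
      have : (r x : ℕ) < 2 ^ n := (r x).2
      exact le_trans (Nat.size_le.2 this) (Nat.le_succ n)
    · -- key bound : ((r x) + 1) * μ x ≤ 1
      have key : ((r x : ℕ) + 1 : ℝ) * μ x ≤ 1 := by
        have hμx : ∀ i : Fin N, i ≤ r x → μ x ≤ μ (E.symm (σ i)) := by
          intro i hi
          have := hmono hi
          simp only [Function.comp, g] at this
          have hx : μ (E.symm (σ (r x))) = μ x := by
            simp [r, E]
          rw [hx] at this
          linarith
        have hsub : Finset.filter (fun i => i ≤ r x) Finset.univ ⊆ (Finset.univ : Finset (Fin N)) :=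
          Finset.filter_subset _ _
        have hcardf : (Finset.filter (fun i => i ≤ r x) Finset.univ).card = (r x : ℕ) + 1 := by
          have : Finset.filter (fun i => i ≤ r x) Finset.univ = Finset.Iic (r x) := by
            ext i; simp
          rw [this, Fin.card_Iic]
        calc ((r x : ℕ) + 1 : ℝ) * μ x
            = ∑ _i ∈ Finset.filter (fun i => i ≤ r x) Finset.univ, μ x := by
              rw [Finset.sum_const, hcardf]; push_cast; ring
          _ ≤ ∑ i ∈ Finset.filter (fun i => i ≤ r x) Finset.univ, μ (E.symm (σ i)) := by
              apply Finset.sum_le_sum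
              intro i hi
              exact hμx i (by simpa using hi)
          _ ≤ ∑ i : Fin N, μ (E.symm (σ i)) := by
              apply Finset.sum_le_sum_of_subset_of_nonneg hsub
              intro i _ _; exact hpos _
          _ = ∑ x : Fin n → Bool, μ x := by
              rw [Equiv.sum_comp σ (fun i => μ (E.symm i)), Equiv.sum_comp E.symm μ]
          _ = 1 := hsum
      rw [hlen]
      set k := (r x : ℕ) with hk
      rcases Nat.eq_zero_or_pos k with h0 | hpos'
      · rw [h0]
        simp only [Nat.size_zero, pow_zero]
        have : μ x ≤ 1 := by nlinarith
        linarith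
      · -- 2 ^ size k ≤ 2 * k
        have hsz : 1 ≤ Nat.size k := by
          rw [Nat.succ_le_iff, Nat.lt_size]; exact hpos'
        have h2 : 2 ^ (Nat.size k - 1) ≤ k := by
          by_contra hlt
          push_neg at hlt
          have := Nat.size_le.2 hlt
          omega
        have h3 : 2 ^ Nat.size k ≤ 2 * k := by
          calc 2 ^ Nat.size k = 2 * 2 ^ (Nat.size k - 1) := by
                rw [← pow_succ']; congr 1; omega
            _ ≤ 2 * k := by omega
        have h3R : (2 : ℝ) ^ Nat.size k ≤ 2 * k := by exact_mod_cast h3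
        have hmx : μ x ≤ 1 / (k + 1 : ℝ) := by
          rw [le_div_iff₀ (by positivity)]
          linarith [key]
        have hp : (0:ℝ) < 2 ^ Nat.size k := by positivity
        rw [le_div_iff₀ hp]
        -- μ x * 2^size k ≤ 4
        have hkpos : (1:ℝ) ≤ k := by exact_mod_cast hpos'
        calc μ x * 2 ^ Nat.size k ≤ μ x * (2 * k) := by
              apply mul_le_mul_of_nonneg_left h3R (hpos x)
          _ ≤ (1 / (k + 1 : ℝ)) * (2 * k) := by
              apply mul_le_mul_of_nonneg_right hmx
              positivity
          _ ≤ 4 := by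
              rw [div_mul_eq_mul_div, div_le_iff₀ (by positivity)]
              nlinarith
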